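/- Fix N ≥ 1, M ≥ 1 and ε = (ε₀,…,ε_{N−1}) ∈ {0,1}^N, and work over a field. Suppose that for each s = t, t+1, …, t+M−1 the Lax equation L₁^{(s+1)} L₂^{(s+1)} R^{(s+M)} = R^{(s)} L₁^{(s)} L₂^{(s)} holds, where R^{(s)} = R(q^{(s)}) and L₁^{(s)}, L₂^{(s)} are built from parameters e^{(s)} as in the context. Define X^{(s)} = L₁^{(s)} L₂^{(s)} R^{(s+M−1)} R^{(s+M−2)} ⋯ R^{(s)}. Then X^{(t+M)} = (L₁^{(t)} L₂^{(t)})^{−1} X^{(t)} L₁^{(t)} L₂^{(t)}; in particular X^{(t+M)} and X^{(t)} have the same characteristic polynomial, so the characteristic polynomial of X^{(t)} is a conserved quantity of the discrete hungry elementary Toda orbits. -/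
import Mathlib

open Matrix Polynomial

/-- `R(q)`: upper bidiagonal matrix with diagonal `q₀,…,q_{N-1}` and superdiagonal `1`. -/
def Rm {F : Type*} [Field F] (N : ℕ) (q : ℕ → F) : Matrix (Fin N) (Fin N) F :=
  Matrix.of fun a b => if (a : ℕ) = (b : ℕ) then q a
    else if (b : ℕ) = (a : ℕ) + 1 then 1 else 0

/-- `L₁`: the inverse of `I - Σ_{a=1}^{N-1} ε_{a-1} e_{a-1} E_{a+1,a}`. -/
noncomputable def L1m {F : Type*} [Field F] (N : ℕ) (ε : ℕ → F) (e : ℕ → F) :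
    Matrix (Fin N) (Fin N) F :=
  (1 - Matrix.of fun a b : Fin N =>
    if (a : ℕ) = (b : ℕ) + 1 then ε b * e b else 0)⁻¹

/-- `L₂ = I + Σ_{a=1}^{N-1} (1-ε_{a-1}) e_{a-1} E_{a+1,a}`. -/
def L2m {F : Type*} [Field F] (N : ℕ) (ε : ℕ → F) (e : ℕ → F) :
    Matrix (Fin N) (Fin N) F :=
  1 + Matrix.of fun a b : Fin N =>
    if (a : ℕ) = (b : ℕ) + 1 then (1 - ε b) * e b else 0

/-- `X^{(s)} = L₁^{(s)} L₂^{(s)} R^{(s+M-1)} R^{(s+M-2)} ⋯ R^{(s)}`. -/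
noncomputable def Xm {F : Type*} [Field F] (N M : ℕ) (ε : ℕ → F) (q e : ℕ → ℕ → F)
    (s : ℕ) : Matrix (Fin N) (Fin N) F :=
  (List.range M).foldl (fun A j => A * Rm N (q (s + (M - 1 - j))))
    (L1m N ε (e s) * L2m N ε (e s))

/-! ### Auxiliary lemmas -/

/-- The characteristic polynomial is invariant under conjugation by an invertible matrix. -/
lemma my_charpoly_conj {F : Type*} [Field F] {n : ℕ} (P A : Matrix (Fin n) (Fin n) F)
    (hP : IsUnit P) : (P⁻¹ * A * P).charpoly = A.charpoly := by
  obtain ⟨u, rfl⟩ := hP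
  rw [← Matrix.coe_units_inv u]
  let f : Matrix (Fin n) (Fin n) F →* Matrix (Fin n) (Fin n) F[X] :=
    ((Polynomial.C).mapMatrix : Matrix (Fin n) (Fin n) F →+* _).toMonoidHom
  let v := Units.map f u
  have key : Matrix.charmatrix ((↑u⁻¹ : Matrix (Fin n) (Fin n) F) * A * (↑u : Matrix (Fin n) (Fin n) F))
      = (↑v⁻¹ : Matrix (Fin n) (Fin n) F[X]) * Matrix.charmatrix A * (↑v : Matrix (Fin n) (Fin n) F[X]) := by
    have hv : (↑v : Matrix (Fin n) (Fin n) F[X]) = (Polynomial.C).mapMatrix (↑u) := rfl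
    have hv' : (↑v⁻¹ : Matrix (Fin n) (Fin n) F[X]) = (Polynomial.C).mapMatrix (↑u⁻¹) := rfl
    rw [Matrix.charmatrix, Matrix.charmatrix, mul_sub, sub_mul, hv, hv']
    congr 1
    · have hc : Commute (Matrix.scalar (Fin n) (X : F[X]))
          ((Polynomial.C).mapMatrix (↑u : Matrix (Fin n) (Fin n) F)) :=
        Matrix.scalar_commute _ (fun r => Commute.all _ _) _
      rw [mul_assoc, hc.eq, ← mul_assoc, ← _root_.map_mul, Units.inv_mul, _root_.map_one, one_mul]
    · rw [← _root_.map_mul, ← _root_.map_mul]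
  simp only [Matrix.charpoly]
  rw [key, Matrix.det_units_conj']

/-- Determinant of a unipotent lower-bidiagonal matrix is `1`. -/
lemma my_lower_det_one {F : Type*} [Field F] {N : ℕ} (g : Fin N → F) :
    (1 + Matrix.of fun a b : Fin N =>
      if (a : ℕ) = (b : ℕ) + 1 then g b else 0).det = 1 := by
  rw [Matrix.det_of_lowerTriangular]
  · have h1 : ∀ i : Fin N, (1 + Matrix.of fun a b : Fin N =>
        if (a : ℕ) = (b : ℕ) + 1 then g b else 0) i i = 1 := by
      intro i
      simp [Matrix.add_apply, Matrix.one_apply]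
    simp [h1]
  · intro i j hij
    have h : (i : ℕ) < (j : ℕ) := hij
    have h1 : i ≠ j := by
      intro hh; subst hh; exact lt_irrefl _ h
    simp only [Matrix.add_apply, Matrix.one_apply, Matrix.of_apply, if_neg h1]
    rw [if_neg (by omega)]
    simp

lemma my_L1_isUnit {F : Type*} [Field F] {N : ℕ} (ε e : ℕ → F) : IsUnit (L1m N ε e) := by
  rw [L1m, Matrix.isUnit_nonsing_inv_iff, Matrix.isUnit_iff_isUnit_det]
  have h : (1 - Matrix.of fun a b : Fin N =>
      if (a : ℕ) = (b : ℕ) + 1 then ε b * e b else 0)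
      = 1 + Matrix.of fun a b : Fin N =>
        if (a : ℕ) = (b : ℕ) + 1 then -(ε b * e b) else 0 := by
    ext i j
    by_cases hc : (i : ℕ) = (j : ℕ) + 1 <;>
      simp [Matrix.sub_apply, Matrix.add_apply, hc, sub_eq_add_neg]
  rw [h, my_lower_det_one (fun b : Fin N => -(ε (b : ℕ) * e (b : ℕ)))]
  exact isUnit_one

lemma my_L2_isUnit {F : Type*} [Field F] {N : ℕ} (ε e : ℕ → F) : IsUnit (L2m N ε e) := by
  rw [Matrix.isUnit_iff_isUnit_det, L2m,
    my_lower_det_one (fun b : Fin N => (1 - ε (b : ℕ)) * e (b : ℕ))]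
  exact isUnit_one

/-- the Lax equations imply `X^{(t+M)} = (L₁L₂)⁻¹ X^{(t)} (L₁L₂)`, so the
characteristic polynomial of `X^{(t)}` is conserved. -/
theorem stmt_5 {F : Type*} [Field F] (N M : ℕ) (hN : 1 ≤ N) (hM : 1 ≤ M)
    (ε : ℕ → F) (hε : ∀ i, ε i = 0 ∨ ε i = 1)
    (q e : ℕ → ℕ → F) (t : ℕ)
    (hLax : ∀ s, t ≤ s → s ≤ t + M - 1 →
      L1m N ε (e (s + 1)) * L2m N ε (e (s + 1)) * Rm N (q (s + M))
        = Rm N (q s) * (L1m N ε (e s) * L2m N ε (e s))) :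
    Xm N M ε q e (t + M)
        = (L1m N ε (e t) * L2m N ε (e t))⁻¹ * Xm N M ε q e t *
            (L1m N ε (e t) * L2m N ε (e t)) ∧
      (Xm N M ε q e (t + M)).charpoly = (Xm N M ε q e t).charpoly := by
  -- notation
  let P : ℕ → Matrix (Fin N) (Fin N) F := fun s => L1m N ε (e s) * L2m N ε (e s)
  let Lp : ℕ → ℕ → Matrix (Fin N) (Fin N) F := fun s k =>
    ((List.range k).map (fun j => Rm N (q (s + (k - 1 - j))))).prod
  -- fold to product
  have hfold : ∀ (l : List ℕ) (A : Matrix (Fin N) (Fin N) F)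
      (f : ℕ → Matrix (Fin N) (Fin N) F),
      l.foldl (fun B j => B * f j) A = A * (l.map f).prod := by
    intro l
    induction l with
    | nil => intro A f; simp
    | cons a l ih => intro A f; simp [List.foldl_cons, ih, mul_assoc]
  have hX : ∀ s, Xm N M ε q e s = P s * Lp s M := by
    intro s; rw [Xm, hfold]
  -- cons expansion
  have hcons : ∀ (s k : ℕ), Lp s (k + 1) = Rm N (q (s + k)) * Lp s k := by
    intro s k
    show ((List.range (k+1)).map (fun j => Rm N (q (s + (k + 1 - 1 - j))))).prod = _
    rw [List.range_succ_eq_map, List.map_cons, List.map_map, List.prod_cons]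
    have h0 : s + (k + 1 - 1 - 0) = s + k := by omega
    rw [h0]
    congr 1
    apply congrArg
    apply List.map_congr_left
    intro j _
    have h2 : s + (k - (j + 1)) = s + (k - 1 - j) := by omega
    simp [Function.comp, h2]
  -- the key induction
  have key : ∀ k, k ≤ M → P (t + k) * Lp (t + M) k = Lp t k * P t := by
    intro k
    induction k with
    | zero => intro _; simp [Lp]
    | succ k ih =>
      intro hk
      have hk' : k ≤ M := Nat.le_of_succ_le hk
      have hlax := hLax (t + k) (Nat.le_add_right _ _) (by omega)
      have hidx : t + M + k = t + k + M := by omega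
      show P (t + k + 1) * Lp (t + M) (k + 1) = Lp t (k + 1) * P t
      calc P (t + k + 1) * Lp (t + M) (k + 1)
          = (P (t + k + 1) * Rm N (q (t + k + M))) * Lp (t + M) k := by
            rw [hcons, ← mul_assoc, hidx]
        _ = Rm N (q (t + k)) * (P (t + k) * Lp (t + M) k) := by
            rw [hlax, mul_assoc]
        _ = Rm N (q (t + k)) * (Lp t k * P t) := by rw [ih hk']
        _ = Lp t (k + 1) * P t := by rw [hcons, mul_assoc]
  have hmain : Xm N M ε q e (t + M) = Lp t M * P t := by
    rw [hX, key M le_rfl]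
  have hU : IsUnit (P t) := (my_L1_isUnit ε (e t)).mul (my_L2_isUnit ε (e t))
  have hUdet : IsUnit (P t).det := (Matrix.isUnit_iff_isUnit_det _).mp hU
  have hconj : Xm N M ε q e (t + M) = (P t)⁻¹ * Xm N M ε q e t * P t := by
    rw [hmain, hX t]
    calc Lp t M * P t = 1 * (Lp t M * P t) := (one_mul _).symm
      _ = ((P t)⁻¹ * P t) * (Lp t M * P t) := by
          rw [Matrix.nonsing_inv_mul _ hUdet]
      _ = (P t)⁻¹ * (P t * Lp t M) * P t := by simp only [mul_assoc]
  exact ⟨hconj, by rw [hconj, my_charpoly_conj _ _ hU]⟩
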